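/- Let F be a field and E a finite Galois extension of F with Galois group Gal(E/F). Let A be an n×m matrix with entries in E. Then there exists a nonzero λ ∈ E such that λA has all its entries in F if and only if for every σ ∈ Gal(E/F) there exists μ_σ ∈ E with A^σ = μ_σ · A (where A^σ denotes entrywise application of σ). -/

import Mathlib

theorem exists_scalar_entries_in_base_iff
    (F E : Type*) [Field F] [Field E] [Algebra F E]
    [FiniteDimensional F E] [IsGalois F E]
    (n m : ℕ) (A : Matrix (Fin n) (Fin m) E) :
    (∃ l : E, l ≠ 0 ∧ ∀ i j, l * A i j ∈ (algebraMap F E).range) ↔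
      (∀ σ : E ≃ₐ[F] E, ∃ μ : E, ∀ i j, σ (A i j) = μ * A i j) := by
  have hfix : IntermediateField.fixedField (⊤ : Subgroup (E ≃ₐ[F] E)) = ⊥ :=
    ((IsGalois.tfae (F := F) (E := E)).out 0 1).mp ‹IsGalois F E›
  have key : ∀ x : E, (∀ σ : E ≃ₐ[F] E, σ x = x) → x ∈ (algebraMap F E).range := by
    intro x hx
    have : x ∈ IntermediateField.fixedField (⊤ : Subgroup (E ≃ₐ[F] E)) := by
      intro σ; exact hx σ
    rw [hfix, IntermediateField.mem_bot] at this
    exact this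
  constructor
  · rintro ⟨l, hl, h⟩ σ
    refine ⟨σ l⁻¹ * l, fun i j => ?_⟩
    obtain ⟨c, hc⟩ := h i j
    have : σ (l * A i j) = l * A i j := by rw [← hc, AlgEquiv.commutes]
    have h2 : σ l * σ (A i j) = l * A i j := by rw [← map_mul]; exact this
    have hσl : σ l ≠ 0 := fun h0 => hl (by simpa using σ.injective (h0.trans (map_zero σ).symm))
    field_simp [map_inv₀]
    rw [one_div, map_inv₀]
    have h3 : σ (A i j) = l * A i j * (σ l)⁻¹ := by
      rw [← h2, mul_comm (σ l), mul_assoc, mul_inv_cancel₀ hσl, mul_one]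
    rw [h3]; ring
  · intro h
    by_cases hA : ∀ i j, A i j = 0
    · exact ⟨1, one_ne_zero, fun i j => by simp [hA i j]⟩
    · push_neg at hA
      obtain ⟨i₀, j₀, hc⟩ := hA
      refine ⟨(A i₀ j₀)⁻¹, inv_ne_zero hc, fun i j => ?_⟩
      apply key
      intro σ
      obtain ⟨μ, hμ⟩ := h σ
      have hμ0 : μ ≠ 0 := by
        intro h0
        apply hc
        have := hμ i₀ j₀
        rw [h0, zero_mul] at this
        exact σ.injective (by simpa using this)
      rw [map_mul, map_inv₀, hμ i j, hμ i₀ j₀, mul_inv]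
      field_simp
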